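/- For every natural number n, the game {n·↓ + * | 0} is equal (as a game value) to (n+1)·↓. -/

import Mathlib

universe u

namespace SetTheory

/-- Combinatorial pre-games (removed from Mathlib; restored with the old definition). -/
inductive PGame : Type (u + 1)
  | mk : ∀ α β : Type u, (α → PGame) → (β → PGame) → PGame

namespace PGame

/-- The pre-game with the given lists of left and right options. -/
def ofLists (L R : List PGame.{u}) : PGame.{u} :=
  mk (ULift (Fin L.length)) (ULift (Fin R.length)) (fun i => L.get i.down) fun j => R.get j.down

instance : Zero PGame.{u} :=
  ⟨mk PEmpty PEmpty PEmpty.elim PEmpty.elim⟩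

/-- Disjunctive sum of pre-games. -/
noncomputable def add (x : PGame.{u}) : PGame.{u} → PGame.{u} :=
  PGame.rec (motive := fun _ => PGame.{u} → PGame.{u})
    (fun xl xr _ _ IHxl IHxr y =>
      PGame.rec (motive := fun _ => PGame.{u})
        (fun yl yr yL yR IHyl IHyr =>
          mk (xl ⊕ yl) (xr ⊕ yr) (Sum.elim (fun i => IHxl i (mk yl yr yL yR)) IHyl)
            (Sum.elim (fun i => IHxr i (mk yl yr yL yR)) IHyr)) y) x

noncomputable instance : Add PGame.{u} := ⟨add⟩

/-- The pair (x ≤ y, x ⧏ y), defined by simultaneous recursion. -/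
noncomputable def leLF (x : PGame.{u}) : PGame.{u} → Prop × Prop :=
  PGame.rec (motive := fun _ => PGame.{u} → Prop × Prop)
    (fun xl xr _ _ IHxl IHxr y =>
      PGame.rec (motive := fun _ => Prop × Prop)
        (fun yl yr yL yR IHyl IHyr =>
          ((∀ i, (IHxl i (mk yl yr yL yR)).2) ∧ ∀ j, (IHyr j).2,
           (∃ i, (IHyl i).1) ∨ ∃ j, (IHxr j (mk yl yr yL yR)).1)) y) x

instance : LE PGame.{u} := ⟨fun x y => (leLF x y).1⟩

/-- Equivalence of pre-games: `x ≤ y ∧ y ≤ x`. -/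
def Equiv (x y : PGame.{u}) : Prop := x ≤ y ∧ y ≤ x

instance : HasEquiv PGame.{u} := ⟨Equiv⟩

end PGame

end SetTheory

open SetTheory PGame

/-- star = {0|0} -/
noncomputable def star' : PGame := PGame.ofLists [0] [0]
/-- up = {0|*} -/
noncomputable def up' : PGame := PGame.ofLists [0] [star']
/-- down = {*|0} -/
noncomputable def down' : PGame := PGame.ofLists [star'] [0]

/-- sum of n copies of up -/
noncomputable def nUp : ℕ → PGame
  | 0 => 0
  | n + 1 => nUp n + up'

/-- sum of n copies of down -/
noncomputable def nDown : ℕ → PGame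
  | 0 => 0
  | n + 1 => nDown n + down'

/-- iterated up: up^[1] = ↑, up^[n] = {up^[n-1] | *} -/
noncomputable def upIter : ℕ → PGame
  | 0 => 0
  | 1 => up'
  | n + 2 => PGame.ofLists [upIter (n + 1)] [star']

/-- iterated down: down_[1] = ↓, down_[n] = {* | down_[n-1]} -/
noncomputable def downIter : ℕ → PGame
  | 0 => 0
  | 1 => down'
  | n + 2 => PGame.ofLists [star'] [downIter (n + 1)]


/-! ### restored pre-game library -/

namespace SetTheory

namespace PGame

def LeftMoves : PGame.{u} → Type u
  | mk l _ _ _ => l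

def RightMoves : PGame.{u} → Type u
  | mk _ r _ _ => r

def moveLeft : ∀ g : PGame.{u}, LeftMoves g → PGame.{u}
  | mk _ _ L _ => L

def moveRight : ∀ g : PGame.{u}, RightMoves g → PGame.{u}
  | mk _ _ _ R => R

def LF (x y : PGame.{u}) : Prop := (leLF x y).2

infixl:50 " ⧏ " => SetTheory.PGame.LF

theorem le_iff_forall_lf {x y : PGame.{u}} :
    x ≤ y ↔ (∀ i, x.moveLeft i ⧏ y) ∧ ∀ j, x ⧏ y.moveRight j := by
  cases x; cases y; exact Iff.rfl

theorem lf_iff_exists_le {x y : PGame.{u}} :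
    x ⧏ y ↔ (∃ i, x ≤ y.moveLeft i) ∨ ∃ j, x.moveRight j ≤ y := by
  cases x; cases y; exact Iff.rfl

theorem lf_of_le_moveLeft {x y : PGame.{u}} {i : y.LeftMoves} (h : x ≤ y.moveLeft i) : x ⧏ y :=
  lf_iff_exists_le.2 (Or.inl ⟨i, h⟩)

theorem lf_of_moveRight_le {x y : PGame.{u}} {j : x.RightMoves} (h : x.moveRight j ≤ y) : x ⧏ y :=
  lf_iff_exists_le.2 (Or.inr ⟨j, h⟩)

theorem _root_.LE.le.moveLeft_lf {x y : PGame.{u}} (h : x ≤ y) (i : x.LeftMoves) :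
    x.moveLeft i ⧏ y :=
  (le_iff_forall_lf.1 h).1 i

theorem _root_.LE.le.lf_moveRight {x y : PGame.{u}} (h : x ≤ y) (j : y.RightMoves) :
    x ⧏ y.moveRight j :=
  (le_iff_forall_lf.1 h).2 j

theorem not_le_and_not_lf (x : PGame.{u}) :
    ∀ y : PGame.{u}, (¬ x ≤ y ↔ y ⧏ x) ∧ (¬ x ⧏ y ↔ y ≤ x) := by
  induction x with
  | mk xl xr xL xR IHxl IHxr =>
  intro y
  induction y with
  | mk yl yr yL yR IHyl IHyr =>
  constructor
  · show ¬ ((∀ i, xL i ⧏ mk yl yr yL yR) ∧ ∀ j, mk xl xr xL xR ⧏ yR j) ↔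
      (∃ i, mk yl yr yL yR ≤ xL i) ∨ ∃ j, yR j ≤ mk xl xr xL xR
    rw [not_and_or, not_forall, not_forall]
    exact or_congr (exists_congr fun i => (IHxl i (mk yl yr yL yR)).2)
      (exists_congr fun j => (IHyr j).2)
  · show ¬ ((∃ i, mk xl xr xL xR ≤ yL i) ∨ ∃ j, xR j ≤ mk yl yr yL yR) ↔
      (∀ i, yL i ⧏ mk xl xr xL xR) ∧ ∀ j, mk yl yr yL yR ⧏ xR j
    rw [not_or, not_exists, not_exists]
    exact and_congr (forall_congr' fun i => (IHyl i).1)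
      (forall_congr' fun j => (IHxr j (mk yl yr yL yR)).1)

theorem not_le {x y : PGame.{u}} : ¬ x ≤ y ↔ y ⧏ x := (not_le_and_not_lf x y).1

theorem not_lf {x y : PGame.{u}} : ¬ x ⧏ y ↔ y ≤ x := (not_le_and_not_lf x y).2

theorem pg_le_refl (x : PGame.{u}) : x ≤ x := by
  induction x with
  | mk xl xr xL xR IHxl IHxr =>
  rw [le_iff_forall_lf]
  exact ⟨fun i => lf_of_le_moveLeft (i := i) (IHxl i),
    fun j => lf_of_moveRight_le (j := j) (IHxr j)⟩

theorem lf_irrefl (x : PGame.{u}) : ¬ x ⧏ x := not_lf.2 (pg_le_refl x)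

theorem le_trans_aux {x y z : PGame.{u}}
    (h₁ : ∀ i, y ≤ z → z ≤ x.moveLeft i → y ≤ x.moveLeft i)
    (h₂ : ∀ j, z.moveRight j ≤ x → x ≤ y → z.moveRight j ≤ y) (hxy : x ≤ y) (hyz : y ≤ z) :
    x ≤ z :=
  le_iff_forall_lf.2 ⟨fun i => PGame.not_le.1 fun h => not_lf.2 (h₁ i hyz h) (hxy.moveLeft_lf i),
    fun j => PGame.not_le.1 fun h => not_lf.2 (h₂ j h hxy) (hyz.lf_moveRight j)⟩

theorem pg_le_trans_all (x : PGame.{u}) : ∀ y z : PGame.{u},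
    (x ≤ y → y ≤ z → x ≤ z) ∧ (y ≤ z → z ≤ x → y ≤ x) ∧ (z ≤ x → x ≤ y → z ≤ y) := by
  induction x with
  | mk xl xr xL xR IHxl IHxr =>
  intro y
  induction y with
  | mk yl yr yL yR IHyl IHyr =>
  intro z
  induction z with
  | mk zl zr zL zR IHzl IHzr =>
  exact ⟨le_trans_aux (fun i => (IHxl i (mk yl yr yL yR) (mk zl zr zL zR)).2.1)
      (fun j => (IHzr j).2.2),
    le_trans_aux (fun i => (IHyl i (mk zl zr zL zR)).2.2)
      (fun j => (IHxr j (mk yl yr yL yR) (mk zl zr zL zR)).1),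
    le_trans_aux (fun i => (IHzl i).1) (fun j => (IHyr j (mk zl zr zL zR)).2.1)⟩

theorem pg_le_trans {x y z : PGame.{u}} (h₁ : x ≤ y) (h₂ : y ≤ z) : x ≤ z :=
  (pg_le_trans_all x y z).1 h₁ h₂

instance : Preorder PGame.{u} where
  le x y := x ≤ y
  lt x y := x ≤ y ∧ ¬ y ≤ x
  le_refl := pg_le_refl
  le_trans _ _ _ := pg_le_trans

instance : IsEmpty (LeftMoves (0 : PGame.{u})) := inferInstanceAs (IsEmpty PEmpty)

instance : IsEmpty (RightMoves (0 : PGame.{u})) := inferInstanceAs (IsEmpty PEmpty)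

/-! lists -/

def toOfListsLeftMoves {L R : List PGame.{u}} : Fin L.length ≃ (ofLists L R).LeftMoves :=
  Equiv.ulift.symm

def toOfListsRightMoves {L R : List PGame.{u}} : Fin R.length ≃ (ofLists L R).RightMoves :=
  Equiv.ulift.symm

theorem ofLists_moveLeft' {L R : List PGame.{u}} (i : (ofLists L R).LeftMoves) :
    (ofLists L R).moveLeft i = L.get (toOfListsLeftMoves.symm i) :=
  rfl

theorem ofLists_moveRight' {L R : List PGame.{u}} (i : (ofLists L R).RightMoves) :
    (ofLists L R).moveRight i = R.get (toOfListsRightMoves.symm i) :=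
  rfl

/-! addition -/

def toLeftMovesAdd {x y : PGame.{u}} : x.LeftMoves ⊕ y.LeftMoves ≃ (x + y).LeftMoves := by
  cases x; cases y; exact Equiv.refl _

def toRightMovesAdd {x y : PGame.{u}} : x.RightMoves ⊕ y.RightMoves ≃ (x + y).RightMoves := by
  cases x; cases y; exact Equiv.refl _

@[simp]
theorem add_moveLeft_inl {x y : PGame.{u}} (i : x.LeftMoves) :
    (x + y).moveLeft (toLeftMovesAdd (Sum.inl i)) = x.moveLeft i + y := by
  cases x; cases y; rfl

@[simp]
theorem add_moveLeft_inr {x y : PGame.{u}} (i : y.LeftMoves) :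
    (x + y).moveLeft (toLeftMovesAdd (Sum.inr i)) = x + y.moveLeft i := by
  cases x; cases y; rfl

@[simp]
theorem add_moveRight_inl {x y : PGame.{u}} (i : x.RightMoves) :
    (x + y).moveRight (toRightMovesAdd (Sum.inl i)) = x.moveRight i + y := by
  cases x; cases y; rfl

@[simp]
theorem add_moveRight_inr {x y : PGame.{u}} (i : y.RightMoves) :
    (x + y).moveRight (toRightMovesAdd (Sum.inr i)) = x + y.moveRight i := by
  cases x; cases y; rfl

theorem leftMoves_add_cases {x y : PGame.{u}} (k) {P : (x + y).LeftMoves → Prop}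
    (hl : ∀ i, P (toLeftMovesAdd (Sum.inl i))) (hr : ∀ i, P (toLeftMovesAdd (Sum.inr i))) :
    P k := by
  rw [← toLeftMovesAdd.apply_symm_apply k]
  cases toLeftMovesAdd.symm k with
  | inl i => exact hl i
  | inr i => exact hr i

theorem rightMoves_add_cases {x y : PGame.{u}} (k) {P : (x + y).RightMoves → Prop}
    (hl : ∀ i, P (toRightMovesAdd (Sum.inl i))) (hr : ∀ i, P (toRightMovesAdd (Sum.inr i))) :
    P k := by
  rw [← toRightMovesAdd.apply_symm_apply k]
  cases toRightMovesAdd.symm k with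
  | inl i => exact hl i
  | inr i => exact hr i

inductive Reord : PGame.{u} → PGame.{u} → Prop
  | mk {x y : PGame.{u}} (L : x.LeftMoves ≃ y.LeftMoves) (R : x.RightMoves ≃ y.RightMoves)
      (hL : ∀ i, Reord (x.moveLeft i) (y.moveLeft (L i)))
      (hR : ∀ j, Reord (x.moveRight j) (y.moveRight (R j))) : Reord x y

theorem Reord.equiv {x y : PGame.{u}} (h : Reord x y) : x ≤ y ∧ y ≤ x := by
  induction h with
  | @mk x y L R hL hR ihL ihR =>
    constructor
    · rw [le_iff_forall_lf]
      refine ⟨fun i => lf_of_le_moveLeft (ihL i).1, fun j => lf_of_moveRight_le (j := R.symm j) ?_⟩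
      have := (ihR (R.symm j)).1
      rwa [Equiv.apply_symm_apply] at this
    · rw [le_iff_forall_lf]
      refine ⟨fun i => lf_of_le_moveLeft (i := L.symm i) ?_, fun j => lf_of_moveRight_le (ihR j).2⟩
      have := (ihL (L.symm i)).2
      rwa [Equiv.apply_symm_apply] at this

theorem add_comm_reord (x y : PGame.{u}) : Reord (x + y) (y + x) := by
  induction x generalizing y with
  | mk xl xr xL xR IHxl IHxr =>
  induction y with
  | mk yl yr yL yR IHyl IHyr =>
  refine Reord.mk (Equiv.sumComm xl yl) (Equiv.sumComm xr yr) ?_ ?_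
  · rintro (i | i)
    · exact IHxl i (mk yl yr yL yR)
    · exact IHyl i
  · rintro (j | j)
    · exact IHxr j (mk yl yr yL yR)
    · exact IHyr j

theorem add_assoc_reord (x y z : PGame.{u}) : Reord (x + y + z) (x + (y + z)) := by
  induction x generalizing y z with
  | mk xl xr xL xR IHxl IHxr =>
  induction y generalizing z with
  | mk yl yr yL yR IHyl IHyr =>
  induction z with
  | mk zl zr zL zR IHzl IHzr =>
  refine Reord.mk (Equiv.sumAssoc xl yl zl) (Equiv.sumAssoc xr yr zr) ?_ ?_
  · rintro ((i | i) | i)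
    · exact IHxl i (mk yl yr yL yR) (mk zl zr zL zR)
    · exact IHyl i (mk zl zr zL zR)
    · exact IHzl i
  · rintro ((j | j) | j)
    · exact IHxr j (mk yl yr yL yR) (mk zl zr zL zR)
    · exact IHyr j (mk zl zr zL zR)
    · exact IHzr j

theorem add_zero_reord (x : PGame.{u}) : Reord (x + 0) x := by
  induction x with
  | mk xl xr xL xR IHxl IHxr =>
  refine Reord.mk (Equiv.sumEmpty _ _) (Equiv.sumEmpty _ _) ?_ ?_
  · rintro (i | i)
    · exact IHxl i
    · exact i.elim
  · rintro (j | j)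
    · exact IHxr j
    · exact j.elim

theorem zero_add_reord (x : PGame.{u}) : Reord (0 + x) x := by
  induction x with
  | mk xl xr xL xR IHxl IHxr =>
  refine Reord.mk (Equiv.emptySum _ _) (Equiv.emptySum _ _) ?_ ?_
  · rintro (i | i)
    · exact i.elim
    · exact IHxl i
  · rintro (j | j)
    · exact j.elim
    · exact IHxr j

theorem add_comm_equiv (x y : PGame.{u}) : x + y ≈ y + x := (add_comm_reord x y).equiv

theorem add_assoc_equiv (x y z : PGame.{u}) : x + y + z ≈ x + (y + z) :=
  (add_assoc_reord x y z).equiv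

theorem add_zero_equiv (x : PGame.{u}) : x + 0 ≈ x := (add_zero_reord x).equiv

theorem zero_add_equiv (x : PGame.{u}) : 0 + x ≈ x := (zero_add_reord x).equiv

theorem add_mono_aux (x : PGame.{u}) : ∀ y z : PGame.{u},
    (x ≤ y → x + z ≤ y + z) ∧ (x ⧏ y → x + z ⧏ y + z) := by
  induction x with
  | mk xl xr xL xR IHxl IHxr =>
  intro y
  induction y with
  | mk yl yr yL yR IHyl IHyr =>
  intro z
  induction z with
  | mk zl zr zL zR IHzl IHzr =>
  constructor
  · intro h
    rw [le_iff_forall_lf] at h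
    rw [le_iff_forall_lf]
    constructor
    · rintro (i | k)
      · exact (IHxl i (mk yl yr yL yR) (mk zl zr zL zR)).2 (h.1 i)
      · exact lf_of_le_moveLeft (i := Sum.inr k) ((IHzl k).1 (le_iff_forall_lf.2 h))
    · rintro (j | k)
      · exact (IHyr j (mk zl zr zL zR)).2 (h.2 j)
      · exact lf_of_moveRight_le (j := Sum.inr k) ((IHzr k).1 (le_iff_forall_lf.2 h))
  · intro h
    rw [lf_iff_exists_le] at h
    rcases h with ⟨i, hi⟩ | ⟨j, hj⟩
    · exact lf_of_le_moveLeft (i := Sum.inl i) ((IHyl i (mk zl zr zL zR)).1 hi)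
    · exact lf_of_moveRight_le (j := Sum.inl j) ((IHxr j (mk yl yr yL yR) (mk zl zr zL zR)).1 hj)

theorem add_le_add_right' {x y : PGame.{u}} (h : x ≤ y) (z : PGame.{u}) : x + z ≤ y + z :=
  (add_mono_aux x y z).1 h

theorem add_le_add_left' {y z : PGame.{u}} (h : y ≤ z) (x : PGame.{u}) : x + y ≤ x + z :=
  pg_le_trans (add_comm_equiv x y).1 (pg_le_trans (add_le_add_right' h x) (add_comm_equiv z x).1)

theorem add_congr {a₁ a₂ b₁ b₂ : PGame.{u}} (ha : a₁ ≈ a₂) (hb : b₁ ≈ b₂) :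
    a₁ + b₁ ≈ a₂ + b₂ :=
  ⟨pg_le_trans (add_le_add_right' ha.1 b₁) (add_le_add_left' hb.1 a₂),
    pg_le_trans (add_le_add_right' ha.2 b₂) (add_le_add_left' hb.2 a₁)⟩

/-! negation -/

noncomputable def neg (x : PGame.{u}) : PGame.{u} :=
  PGame.rec (motive := fun _ => PGame.{u}) (fun l r _ _ IHL IHR => mk r l IHR IHL) x

noncomputable instance : Neg PGame.{u} := ⟨neg⟩

theorem neg_mono_aux (x : PGame.{u}) : ∀ y : PGame.{u},
    (x ≤ y → -y ≤ -x) ∧ (x ⧏ y → -y ⧏ -x) := by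
  induction x with
  | mk xl xr xL xR IHxl IHxr =>
  intro y
  induction y with
  | mk yl yr yL yR IHyl IHyr =>
  constructor
  · intro h
    rw [le_iff_forall_lf] at h
    rw [le_iff_forall_lf]
    constructor
    · intro j
      exact (IHyr j).2 (h.2 j)
    · intro i
      exact (IHxl i (mk yl yr yL yR)).2 (h.1 i)
  · intro h
    rw [lf_iff_exists_le] at h
    rcases h with ⟨i, hi⟩ | ⟨j, hj⟩
    · exact lf_of_moveRight_le (j := i) ((IHyl i).1 hi)
    · exact lf_of_le_moveLeft (i := j) ((IHxr j (mk yl yr yL yR)).1 hj)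

theorem neg_le_neg' {x y : PGame.{u}} (h : x ≤ y) : -y ≤ -x := (neg_mono_aux x y).1 h

theorem neg_congr {x y : PGame.{u}} (h : x ≈ y) : -x ≈ -y := ⟨neg_le_neg' h.2, neg_le_neg' h.1⟩

theorem add_neg_aux (x : PGame.{u}) : x + -x ≤ 0 ∧ 0 ≤ x + -x := by
  induction x with
  | mk xl xr xL xR IHxl IHxr =>
  constructor
  · rw [le_iff_forall_lf]
    refine ⟨?_, fun j => isEmptyElim j⟩
    rintro (i | j)
    · show xL i + -(mk xl xr xL xR) ⧏ 0
      refine lf_of_moveRight_le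
        (j := toRightMovesAdd (Sum.inr (show (-(mk xl xr xL xR)).RightMoves from i))) ?_
      rw [add_moveRight_inr]; exact (IHxl i).1
    · show mk xl xr xL xR + -(xR j) ⧏ 0
      refine lf_of_moveRight_le (j := toRightMovesAdd (Sum.inl (show (mk xl xr xL xR).RightMoves from j))) ?_
      rw [add_moveRight_inl]; exact (IHxr j).1
  · rw [le_iff_forall_lf]
    refine ⟨fun i => isEmptyElim i, ?_⟩
    rintro (j | i)
    · show 0 ⧏ xR j + -(mk xl xr xL xR)
      refine lf_of_le_moveLeft
        (i := toLeftMovesAdd (Sum.inr (show (-(mk xl xr xL xR)).LeftMoves from j))) ?_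
      rw [add_moveLeft_inr]; exact (IHxr j).2
    · show 0 ⧏ mk xl xr xL xR + -(xL i)
      refine lf_of_le_moveLeft (i := toLeftMovesAdd (Sum.inl (show (mk xl xr xL xR).LeftMoves from i))) ?_
      rw [add_moveLeft_inl]; exact (IHxl i).2

theorem neg_add_equiv (x : PGame.{u}) : -x + x ≈ 0 :=
  ⟨pg_le_trans (add_comm_equiv (-x) x).1 (add_neg_aux x).1,
    pg_le_trans (add_neg_aux x).2 (add_comm_equiv (-x) x).2⟩

instance setoid : Setoid PGame.{u} :=
  ⟨fun x y => x ≈ y, ⟨fun x => ⟨pg_le_refl x, pg_le_refl x⟩, fun h => ⟨h.2, h.1⟩,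
    fun h1 h2 => ⟨pg_le_trans h1.1 h2.1, pg_le_trans h2.2 h1.2⟩⟩⟩

end PGame

abbrev Game : Type (u + 1) := Quotient PGame.setoid.{u}

namespace Game

instance : LE Game.{u} :=
  ⟨Quotient.lift₂ (fun x y : PGame.{u} => x ≤ y) (fun _ _ _ _ ha hb => propext
    ⟨fun h => PGame.pg_le_trans (PGame.pg_le_trans ha.2 h) hb.1,
     fun h => PGame.pg_le_trans (PGame.pg_le_trans ha.1 h) hb.2⟩)⟩

instance : PartialOrder Game.{u} where
  le := (· ≤ ·)
  lt a b := a ≤ b ∧ ¬ b ≤ a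
  lt_iff_le_not_ge _ _ := Iff.rfl
  le_refl a := Quotient.inductionOn a PGame.pg_le_refl
  le_trans a b c := Quotient.inductionOn₃ a b c fun _ _ _ => PGame.pg_le_trans
  le_antisymm a b := Quotient.inductionOn₂ a b fun _ _ h1 h2 => Quotient.sound ⟨h1, h2⟩

instance : Preorder Game.{u} := PartialOrder.toPreorder

instance : Zero Game.{u} := ⟨⟦0⟧⟩

noncomputable instance : Add Game.{u} :=
  ⟨Quotient.lift₂ (fun x y : PGame.{u} => (⟦x + y⟧ : Game.{u}))
    fun _ _ _ _ ha hb => Quotient.sound (PGame.add_congr ha hb)⟩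

noncomputable instance : Neg Game.{u} :=
  ⟨Quotient.lift (fun x : PGame.{u} => (⟦-x⟧ : Game.{u}))
    fun _ _ h => Quotient.sound (PGame.neg_congr h)⟩

noncomputable instance : AddCommGroup Game.{u} where
  add := (· + ·)
  zero := 0
  neg := Neg.neg
  add_assoc a b c := Quotient.inductionOn₃ a b c fun x y z =>
    Quotient.sound (PGame.add_assoc_equiv x y z)
  zero_add a := Quotient.inductionOn a fun x => Quotient.sound (PGame.zero_add_equiv x)
  add_zero a := Quotient.inductionOn a fun x => Quotient.sound (PGame.add_zero_equiv x)
  neg_add_cancel a := Quotient.inductionOn a fun x => Quotient.sound (PGame.neg_add_equiv x)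
  add_comm a b := Quotient.inductionOn₂ a b fun x y => Quotient.sound (PGame.add_comm_equiv x y)
  nsmul := nsmulRec
  zsmul := zsmulRec

instance : IsOrderedAddMonoid Game.{u} where
  add_le_add_left a b h c := by
    revert h
    exact Quotient.inductionOn₃ a b c fun x y z h => PGame.add_le_add_right' (x := x) (y := y) h z

end Game

namespace PGame

theorem le_iff_game_le {x y : PGame.{u}} : x ≤ y ↔ (⟦x⟧ : Game.{u}) ≤ ⟦y⟧ := Iff.rfl

@[simp]
theorem quot_add (x y : PGame.{u}) : (⟦x + y⟧ : Game.{u}) = ⟦x⟧ + ⟦y⟧ := rfl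

@[simp]
theorem quot_zero : (⟦0⟧ : Game.{u}) = 0 := rfl

theorem game_eq {x y : PGame.{u}} (h : x ≈ y) : (⟦x⟧ : Game.{u}) = ⟦y⟧ := Quotient.sound h

end PGame

end SetTheory

/-! ### auxiliary lemmas -/

theorem nDown_zero : nDown 0 = 0 := rfl
theorem nDown_succ (n : ℕ) : nDown (n + 1) = nDown n + down' := rfl

theorem star'_moveLeft (i) : star'.moveLeft i = 0 := by
  show (PGame.ofLists [0] [0]).moveLeft i = 0
  erw [ofLists_moveLeft']; simp

theorem star'_moveRight (i) : star'.moveRight i = 0 := by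
  show (PGame.ofLists [0] [0]).moveRight i = 0
  erw [ofLists_moveRight']; simp

theorem down'_moveLeft (i) : down'.moveLeft i = star' := by
  show (PGame.ofLists [star'] [0]).moveLeft i = star'
  erw [ofLists_moveLeft']; simp

theorem down'_moveRight (i) : down'.moveRight i = 0 := by
  show (PGame.ofLists [star'] [0]).moveRight i = 0
  erw [ofLists_moveRight']; simp

noncomputable def sL : star'.LeftMoves := toOfListsLeftMoves ⟨0, by simp⟩
noncomputable def sR : star'.RightMoves := toOfListsRightMoves ⟨0, by simp⟩
noncomputable def dL : down'.LeftMoves := toOfListsLeftMoves ⟨0, by simp⟩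
noncomputable def dR : down'.RightMoves := toOfListsRightMoves ⟨0, by simp⟩

/-- the game {nDown n + * | 0} -/
noncomputable def Xg (n : ℕ) : PGame := PGame.ofLists [nDown n + star'] [0]

theorem Xg_moveLeft (n : ℕ) (i) : (Xg n).moveLeft i = nDown n + star' := by
  show (PGame.ofLists [nDown n + star'] [0]).moveLeft i = _
  erw [ofLists_moveLeft']; simp

theorem Xg_moveRight (n : ℕ) (j) : (Xg n).moveRight j = 0 := by
  show (PGame.ofLists [nDown n + star'] [0]).moveRight j = 0
  erw [ofLists_moveRight']; simp

noncomputable def XL (n : ℕ) : (Xg n).LeftMoves := toOfListsLeftMoves ⟨0, by simp⟩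
noncomputable def XR (n : ℕ) : (Xg n).RightMoves := toOfListsRightMoves ⟨0, by simp⟩

/-- helper: to prove `x ⧏ y` it suffices to refute the Game inequality `⟦y⟧ ≤ ⟦x⟧`. -/
theorem glf {x y : PGame} (h : ¬ (⟦y⟧ : Game) ≤ ⟦x⟧) : x ⧏ y :=
  PGame.not_le.1 fun h' => h (le_iff_game_le.1 h')

/-! ### basic inequalities -/

theorem not_zero_le_star' : ¬ (0 : PGame) ≤ star' := fun h =>
  lf_irrefl 0 (by simpa [star'_moveRight] using h.lf_moveRight sR)

theorem not_star'_le_zero : ¬ star' ≤ (0 : PGame) := fun h =>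
  lf_irrefl 0 (by simpa [star'_moveLeft] using h.moveLeft_lf sL)

theorem down'_le_zero : down' ≤ (0 : PGame) := by
  rw [le_iff_forall_lf]
  refine ⟨fun i => ?_, fun j => isEmptyElim j⟩
  rw [down'_moveLeft]; exact PGame.not_le.1 not_zero_le_star'

theorem not_zero_le_down' : ¬ (0 : PGame) ≤ down' := fun h =>
  lf_irrefl 0 (by simpa [down'_moveRight] using h.lf_moveRight dR)

theorem not_down'_le_star' : ¬ down' ≤ star' := fun h =>
  lf_irrefl star' (by simpa [down'_moveLeft] using h.moveLeft_lf dL)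

theorem gd_le : (⟦down'⟧ : Game) ≤ 0 := le_iff_game_le.1 down'_le_zero
theorem gnd0 : ¬ (0 : Game) ≤ ⟦down'⟧ := fun h => not_zero_le_down' (le_iff_game_le.2 h)
theorem gd_lt : (⟦down'⟧ : Game) < 0 := lt_of_le_not_ge gd_le gnd0
theorem gns0 : ¬ (0 : Game) ≤ ⟦star'⟧ := fun h => not_zero_le_star' (le_iff_game_le.2 h)
theorem gns0' : ¬ (⟦star'⟧ : Game) ≤ 0 := fun h => not_star'_le_zero (le_iff_game_le.2 h)
theorem gds : ¬ (⟦down'⟧ : Game) ≤ ⟦star'⟧ := fun h => not_down'_le_star' (le_iff_game_le.2 h)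

theorem gsucc_nsmul_d_neg (q : ℕ) : (q + 1) • (⟦down'⟧ : Game) < 0 := by
  have h1 : (q + 1) • (⟦down'⟧ : Game) ≤ ⟦down'⟧ := by
    rw [succ_nsmul]
    calc q • (⟦down'⟧:Game) + ⟦down'⟧ ≤ 0 + ⟦down'⟧ :=
          add_le_add_left (nsmul_nonpos gd_le q) _
      _ = ⟦down'⟧ := zero_add _
  exact lt_of_le_of_lt h1 gd_lt

/-- * + * = 0 -/
theorem gss : (⟦star'⟧ : Game) + ⟦star'⟧ = 0 := by
  have h1 : star' + star' ≤ 0 := by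
    rw [le_iff_forall_lf]
    refine ⟨fun i => ?_, fun j => isEmptyElim j⟩
    refine leftMoves_add_cases (P := fun i => (star' + star').moveLeft i ⧏ 0) i ?_ ?_ <;> intro k
    · rw [add_moveLeft_inl, star'_moveLeft]
      apply glf; intro h; apply gns0; simpa using h
    · rw [add_moveLeft_inr, star'_moveLeft]
      apply glf; intro h; apply gns0; simpa using h
  have h2 : (0 : PGame) ≤ star' + star' := by
    rw [le_iff_forall_lf]
    refine ⟨fun i => isEmptyElim i, fun j => ?_⟩
    refine rightMoves_add_cases (P := fun j => 0 ⧏ (star' + star').moveRight j) j ?_ ?_ <;> intro k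
    · rw [add_moveRight_inl, star'_moveRight]
      apply glf; intro h; apply gns0'; simpa using h
    · rw [add_moveRight_inr, star'_moveRight]
      apply glf; intro h; apply gns0'; simpa using h
  have := game_eq (⟨h1, h2⟩ : star' + star' ≈ 0)
  simpa using this

/-- ⇓* ≤ 0 -/
theorem g2ds : (⟦down'⟧ : Game) + ⟦down'⟧ + ⟦star'⟧ ≤ 0 := by
  have h1 : down' + down' + star' ≤ 0 := by
    rw [le_iff_forall_lf]
    refine ⟨fun i => ?_, fun j => isEmptyElim j⟩
    refine leftMoves_add_cases (P := fun i => (down' + down' + star').moveLeft i ⧏ 0) i ?_ ?_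
    · intro k
      rw [add_moveLeft_inl]
      refine leftMoves_add_cases (P := fun k => (down' + down').moveLeft k + star' ⧏ 0) k ?_ ?_ <;> intro m
      · rw [add_moveLeft_inl, down'_moveLeft]
        apply glf; intro h; apply gnd0
        have e : (⟦star' + down'⟧ : Game) + ⟦star'⟧ = ⟦down'⟧ := by
          rw [quot_add]
          rw [show (⟦star'⟧ + ⟦down'⟧ + ⟦star'⟧ : Game)
              = ⟦down'⟧ + (⟦star'⟧ + ⟦star'⟧) from by abel, gss, add_zero]
        rw [show ((⟦star' + down' + star'⟧ : Game)) = ⟦star' + down'⟧ + ⟦star'⟧ from quot_add _ _, e] at h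
        simpa using h
      · rw [add_moveLeft_inr, down'_moveLeft]
        apply glf; intro h; apply gnd0
        have e : (⟦down' + star'⟧ : Game) + ⟦star'⟧ = ⟦down'⟧ := by
          rw [quot_add]
          rw [show (⟦down'⟧ + ⟦star'⟧ + ⟦star'⟧ : Game)
              = ⟦down'⟧ + (⟦star'⟧ + ⟦star'⟧) from by abel, gss, add_zero]
        rw [show ((⟦down' + star' + star'⟧ : Game)) = ⟦down' + star'⟧ + ⟦star'⟧ from quot_add _ _, e] at h
        simpa using h
    · intro k
      rw [add_moveLeft_inr, star'_moveLeft]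
      apply glf; intro h
      have : (0 : Game) ≤ ⟦down'⟧ + ⟦down'⟧ := by
        have e : (⟦down' + down' + 0⟧ : Game) = ⟦down'⟧ + ⟦down'⟧ := by simp
        rw [e] at h; simpa using h
      exact (add_neg gd_lt gd_lt).not_ge this
  have := le_iff_game_le.1 h1
  simpa using this

/-- ¬ 0 ≤ ↓* -/
theorem not_zero_le_ds : ¬ (0 : PGame) ≤ down' + star' := by
  intro h
  have h1 := h.lf_moveRight (toRightMovesAdd (Sum.inr sR))
  rw [add_moveRight_inr, star'_moveRight] at h1
  exact PGame.not_le.2 h1 ((add_zero_equiv down').1.trans down'_le_zero)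

/-- ¬ 0 ≤ q·↓ + * for any q -/
theorem gq : ∀ q : ℕ, ¬ (0 : Game) ≤ q • ⟦down'⟧ + ⟦star'⟧ := by
  intro q
  match q with
  | 0 => simpa using gns0
  | 1 =>
    intro h
    apply not_zero_le_ds
    apply le_iff_game_le.2
    rw [quot_add]
    simpa using h
  | (r + 2) =>
    intro h
    set d : Game := ⟦down'⟧
    set s : Game := ⟦star'⟧
    have e : (r + 2) • d + s = r • d + (d + d + s) := by
      rw [succ_nsmul, succ_nsmul]; abel
    rw [e] at h
    have h2 : r • d + (d + d + s) ≤ r • d + 0 := add_le_add_right g2ds _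
    rw [add_zero] at h2
    have h3 : (0 : Game) ≤ r • d := h.trans h2
    have h4 : r • d = 0 := le_antisymm (nsmul_nonpos gd_le r) h3
    rw [h4, zero_add] at h
    have h6 : d + d + s = 0 := le_antisymm g2ds h
    have hs : s = -(d + d) := eq_neg_of_add_eq_zero_right h6
    apply gds
    show d ≤ s
    have h7 : d - -(d + d) ≤ 0 := by
      rw [sub_neg_eq_add]
      exact add_nonpos gd_le (add_nonpos gd_le gd_le)
    rw [hs]
    exact sub_nonpos.1 h7

theorem quot_nDown : ∀ n : ℕ, (⟦nDown n⟧ : Game) = n • ⟦down'⟧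
  | 0 => by simp [nDown_zero]
  | n + 1 => by
    rw [nDown_succ, quot_add, quot_nDown n, succ_nsmul]

theorem quot_nDown_moveLeft :
    ∀ (n : ℕ) (i : (nDown n).LeftMoves),
      (⟦(nDown n).moveLeft i⟧ : Game) = (n - 1) • ⟦down'⟧ + ⟦star'⟧
  | 0, i => (show PEmpty from i).elim
  | n + 1, i => by
    show (⟦(nDown n + down').moveLeft i⟧ : Game) = (n + 1 - 1) • ⟦down'⟧ + ⟦star'⟧
    refine leftMoves_add_cases
      (P := fun i => (⟦(nDown n + down').moveLeft i⟧ : Game) = (n + 1 - 1) • ⟦down'⟧ + ⟦star'⟧)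
      i ?_ ?_ <;> intro j
    · match n, j with
      | 0, j => exact (show PEmpty from j).elim
      | m + 1, j =>
        rw [add_moveLeft_inl, quot_add, quot_nDown_moveLeft (m + 1) j]
        simp only [Nat.add_sub_cancel]
        rw [succ_nsmul]; abel
    · rw [add_moveLeft_inr, down'_moveLeft, quot_add, quot_nDown]
      simp

theorem quot_nDown_moveRight :
    ∀ (n : ℕ) (j : (nDown n).RightMoves),
      (⟦(nDown n).moveRight j⟧ : Game) = (n - 1) • ⟦down'⟧
  | 0, j => (show PEmpty from j).elim
  | n + 1, j => by
    show (⟦(nDown n + down').moveRight j⟧ : Game) = (n + 1 - 1) • ⟦down'⟧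
    refine rightMoves_add_cases
      (P := fun j => (⟦(nDown n + down').moveRight j⟧ : Game) = (n + 1 - 1) • ⟦down'⟧)
      j ?_ ?_ <;> intro i
    · match n, i with
      | 0, i => exact (show PEmpty from i).elim
      | m + 1, i =>
        rw [add_moveRight_inl, quot_add, quot_nDown_moveRight (m + 1) i]
        simp only [Nat.add_sub_cancel]
        rw [succ_nsmul]
    · rw [add_moveRight_inr, down'_moveRight, quot_add, quot_nDown]
      simp

/-- master lemma -/
theorem master (n : ℕ) : ∀ k : ℕ,
    (k ≤ n → ¬ nDown.{u} k ≤ Xg.{u} n) ∧ (k ≤ n → Xg.{u} n ≤ nDown.{u} k) ∧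
    (k ≤ n → ¬ nDown.{u} k + star'.{u} ≤ Xg.{u} n) ∧
    (k < n → Xg.{u} n ≤ nDown.{u} k + star'.{u}) := by
  intro k
  induction k using Nat.strong_induction_on with
  | _ k IH =>
  have A : k ≤ n → ¬ nDown k ≤ Xg n := by
    intro hk h
    match k, hk, h with
    | 0, hk, h =>
      have := h.lf_moveRight (XR n)
      rw [Xg_moveRight] at this
      exact lf_irrefl 0 this
    | j + 1, hk, h =>
      have hB := (IH j (by omega)).2.2.2 (by omega)
      have h' : nDown j + down' ≤ Xg n := h
      have h1 := h'.moveLeft_lf (toLeftMovesAdd (Sum.inr dL))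
      rw [add_moveLeft_inr, down'_moveLeft] at h1
      exact PGame.not_le.2 h1 hB
  have E : k ≤ n → Xg n ≤ nDown k := by
    intro hk
    rw [le_iff_forall_lf]
    constructor
    · intro i
      rw [Xg_moveLeft]
      apply glf; intro h
      apply gq (n - k)
      have h0 := sub_nonneg.2 h
      have e : (⟦nDown n + star'⟧ : Game) - ⟦nDown k⟧
          = (n - k) • ⟦down'⟧ + ⟦star'⟧ := by
        rw [quot_add, quot_nDown, quot_nDown, sub_nsmul _ hk]; abel
      rw [e] at h0
      exact h0
    · intro j
      match k, hk, j with
      | 0, hk, j => exact (show PEmpty from j).elim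
      | r + 1, hk, j =>
        apply glf; intro h
        rw [quot_nDown_moveRight (r + 1) j] at h
        simp only [Nat.add_sub_cancel] at h
        exact (IH r (by omega)).1 (by omega)
          (le_iff_game_le.2 (by rw [quot_nDown]; exact h))
  have C : k ≤ n → ¬ nDown k + star' ≤ Xg n := by
    intro hk h
    have h1 := h.moveLeft_lf (toLeftMovesAdd (Sum.inr sL))
    rw [add_moveLeft_inr, star'_moveLeft] at h1
    exact PGame.not_le.2 h1 ((E hk).trans (add_zero_equiv (nDown k)).2)
  have B : k < n → Xg n ≤ nDown k + star' := by
    intro hk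
    rw [le_iff_forall_lf]
    constructor
    · intro i
      rw [Xg_moveLeft]
      apply glf; intro h
      rw [quot_add, quot_add, quot_nDown, quot_nDown] at h
      have h' : (k : ℕ) • (⟦down'⟧:Game) ≤ n • ⟦down'⟧ := (add_le_add_iff_right _).1 h
      have h0 : (0 : Game) ≤ (n - k) • ⟦down'⟧ := by
        rw [sub_nsmul _ hk.le]; exact sub_nonneg.2 h'
      obtain ⟨q, hq⟩ : ∃ q, n - k = q + 1 := ⟨n - k - 1, by omega⟩
      rw [hq] at h0
      exact (gsucc_nsmul_d_neg q).not_ge h0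
    · intro j
      refine rightMoves_add_cases (P := fun j => Xg n ⧏ (nDown k + star').moveRight j) j ?_ ?_ <;> intro i
      · match k, hk, i with
        | 0, hk, i => exact (show PEmpty from i).elim
        | r + 1, hk, i =>
          rw [add_moveRight_inl]
          apply glf; intro h
          rw [quot_add, quot_nDown_moveRight (r + 1) i] at h
          simp only [Nat.add_sub_cancel] at h
          exact (IH r (by omega)).2.2.1 (by omega)
            (le_iff_game_le.2 (by rw [quot_add, quot_nDown]; exact h))
      · rw [add_moveRight_inr, star'_moveRight]
        apply glf; intro h
        apply A hk.le
        apply le_iff_game_le.2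
        rw [quot_nDown]
        rw [show ((⟦nDown k + 0⟧ : Game)) = ⟦nDown k⟧ from by simp, quot_nDown] at h
        exact h
  exact ⟨A, E, C, B⟩

theorem Xg_le (n : ℕ) : Xg n ≤ nDown (n + 1) := by
  rw [le_iff_forall_lf]
  constructor
  · intro i
    rw [Xg_moveLeft]
    apply glf; intro h
    rw [quot_nDown, quot_add, quot_nDown, succ_nsmul] at h
    exact gds ((add_le_add_iff_left _).1 h)
  · intro j
    apply glf; intro h
    rw [quot_nDown_moveRight (n + 1) j] at h
    simp only [Nat.add_sub_cancel] at h
    exact (master n n).1 le_rfl (le_iff_game_le.2 (by rw [quot_nDown]; exact h))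

theorem le_Xg (n : ℕ) : nDown (n + 1) ≤ Xg n := by
  rw [le_iff_forall_lf]
  constructor
  · intro i
    apply glf; intro h
    rw [quot_nDown_moveLeft (n + 1) i] at h
    simp only [Nat.add_sub_cancel] at h
    have h2 : Xg n ≤ nDown n + star' :=
      le_iff_game_le.2 (by rw [quot_add, quot_nDown]; exact h)
    have h3 := h2.moveLeft_lf (XL n)
    rw [Xg_moveLeft] at h3
    exact lf_irrefl _ h3
  · intro j
    rw [Xg_moveRight]
    apply glf; intro h
    rw [quot_nDown] at h
    exact (gsucc_nsmul_d_neg n).not_ge (by simpa using h)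

theorem stmt3 (n : ℕ) :
    PGame.ofLists [nDown n + star'] [0] ≈ nDown (n + 1) :=
    ⟨Xg_le n, le_Xg n⟩
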